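/- For each fixed x, u ∈ ℝ, the function t ↦ ∂K_t(x,u)/∂t has at most four zeros in the interval (0,1); more precisely, ∂K_t(x,u)/∂t = K_t(x,u) · P_{x,u}(e^{−t})/(1−e^{−2t})², where P_{x,u} is a polynomial of degree at most 4 in e^{−t}. -/

import Mathlib

open Real MeasureTheory Set

/-- The Mehler kernel of the one-dimensional Ornstein--Uhlenbeck semigroup. -/
noncomputable def mehlerK (t x u : ℝ) : ℝ :=
  Real.exp (x ^ 2 / 2) / Real.sqrt (1 - Real.exp (-2 * t)) *
    Real.exp (-(Real.exp (-t) * u - x) ^ 2 / (2 * (1 - Real.exp (-2 * t))))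

lemma mehler_hasDerivAt (x u t : ℝ) (ht : 0 < t) :
    HasDerivAt (fun s => mehlerK s x u)
      (mehlerK t x u *
        ((Real.exp (-t)) ^ 4 - u * x * (Real.exp (-t)) ^ 3 +
          (x ^ 2 + u ^ 2 - 1) * (Real.exp (-t)) ^ 2 - u * x * Real.exp (-t)) /
        (1 - Real.exp (-2 * t)) ^ 2) t := by
  have hre2 : Real.exp (-2 * t) = Real.exp (-t) ^ 2 := by
    rw [← Real.exp_nat_mul]; ring_nf
  set r := Real.exp (-t) with hrdef
  have hr1 : r < 1 := by
    rw [hrdef]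
    exact Real.exp_lt_one_iff.mpr (by linarith)
  have hrpos : 0 < r := Real.exp_pos _
  have hgpos : 0 < 1 - Real.exp (-2 * t) := by
    rw [hre2]; nlinarith
  -- derivative of s ↦ exp (-s)
  have he : HasDerivAt (fun s : ℝ => Real.exp (-s)) (-r) t := by
    have := (hasDerivAt_neg t).exp
    simpa using this
  have he2 : HasDerivAt (fun s : ℝ => Real.exp (-2 * s)) (-2 * Real.exp (-2 * t)) t := by
    have := ((hasDerivAt_id t).const_mul (-2)).exp
    simpa [mul_comm] using this
  have hg : HasDerivAt (fun s : ℝ => 1 - Real.exp (-2 * s)) (2 * Real.exp (-2 * t)) t := by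
    have := he2.const_sub 1
    exact this.congr_deriv (by ring)
  have hsqrt : HasDerivAt (fun s : ℝ => Real.sqrt (1 - Real.exp (-2 * s)))
      (2 * Real.exp (-2 * t) / (2 * Real.sqrt (1 - Real.exp (-2 * t)))) t :=
    hg.sqrt (ne_of_gt hgpos)
  -- numerator of the exponent
  have hnum : HasDerivAt (fun s : ℝ => -(Real.exp (-s) * u - x) ^ 2)
      (-(2 * (r * u - x) * (-r * u))) t := by
    have h1 := ((he.mul_const u).sub_const x).pow 2
    have := h1.neg
    exact this.congr_deriv (by ring)
  have hden : HasDerivAt (fun s : ℝ => 2 * (1 - Real.exp (-2 * s)))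
      (2 * (2 * Real.exp (-2 * t))) t := hg.const_mul 2
  have hdenne : 2 * (1 - Real.exp (-2 * t)) ≠ 0 := by positivity
  have hh := (hnum.div hden hdenne).exp
  have hC : HasDerivAt (fun s : ℝ => Real.exp (x ^ 2 / 2) / Real.sqrt (1 - Real.exp (-2 * s)))
      ((0 * Real.sqrt (1 - Real.exp (-2 * t)) - Real.exp (x ^ 2 / 2) *
          (2 * Real.exp (-2 * t) / (2 * Real.sqrt (1 - Real.exp (-2 * t)))))
        / (Real.sqrt (1 - Real.exp (-2 * t))) ^ 2) t :=
    (hasDerivAt_const t (Real.exp (x ^ 2 / 2))).div hsqrt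
      (ne_of_gt (Real.sqrt_pos.mpr hgpos))
  have hK := hC.mul hh
  have : (fun s => mehlerK s x u) =
      (fun s : ℝ => (Real.exp (x ^ 2 / 2) / Real.sqrt (1 - Real.exp (-2 * s))) *
        Real.exp (-(Real.exp (-s) * u - x) ^ 2 / (2 * (1 - Real.exp (-2 * s))))) := by
    funext s; rfl
  rw [this]
  refine hK.congr_deriv ?_
  rw [Real.sq_sqrt hgpos.le]
  simp only [mehlerK, hre2, Pi.div_apply]
  have h1r : (0:ℝ) < 1 - r ^ 2 := by nlinarith
  have hsne : Real.sqrt (1 - r ^ 2) ≠ 0 := ne_of_gt (Real.sqrt_pos.mpr h1r)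
  field_simp
  ring

theorem mehler_time_deriv_polynomial_structure (x u : ℝ) :
    (∃ P : Polynomial ℝ, P.degree ≤ 4 ∧
      ∀ t ∈ Set.Ioo (0:ℝ) 1,
        deriv (fun s => mehlerK s x u) t =
          mehlerK t x u * P.eval (Real.exp (-t)) / (1 - Real.exp (-2 * t)) ^ 2) ∧
    ({t ∈ Set.Ioo (0:ℝ) 1 | deriv (fun s => mehlerK s x u) t = 0}.Finite ∧
      {t ∈ Set.Ioo (0:ℝ) 1 | deriv (fun s => mehlerK s x u) t = 0}.ncard ≤ 4) := by
  set P : Polynomial ℝ :=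
    Polynomial.X ^ 4 - Polynomial.C (u * x) * Polynomial.X ^ 3 +
      Polynomial.C (x ^ 2 + u ^ 2 - 1) * Polynomial.X ^ 2 -
      Polynomial.C (u * x) * Polynomial.X with hP
  have heval : ∀ r : ℝ, P.eval r =
      r ^ 4 - u * x * r ^ 3 + (x ^ 2 + u ^ 2 - 1) * r ^ 2 - u * x * r := by
    intro r; simp [hP]
  have hdeg : P.natDegree = 4 := by
    rw [hP]; compute_degree!
  have hdegle : P.degree ≤ 4 := by
    rw [hP]; compute_degree
  have hPne : P ≠ 0 := fun h => by simp [h] at hdeg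
  have hderiv : ∀ t ∈ Set.Ioo (0:ℝ) 1,
      deriv (fun s => mehlerK s x u) t =
        mehlerK t x u * P.eval (Real.exp (-t)) / (1 - Real.exp (-2 * t)) ^ 2 := by
    intro t ht
    rw [(mehler_hasDerivAt x u t ht.1).deriv, heval]
  refine ⟨⟨P, hdegle, hderiv⟩, ?_⟩
  have hKpos : ∀ t ∈ Set.Ioo (0:ℝ) 1, 0 < mehlerK t x u := by
    intro t ht
    have hg : 0 < 1 - Real.exp (-2 * t) := by
      have : Real.exp (-2 * t) < 1 := Real.exp_lt_one_iff.mpr (by nlinarith [ht.1])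
      linarith
    unfold mehlerK
    positivity
  have hzero : {t ∈ Set.Ioo (0:ℝ) 1 | deriv (fun s => mehlerK s x u) t = 0} ⊆
      {t ∈ Set.Ioo (0:ℝ) 1 | P.eval (Real.exp (-t)) = 0} := by
    intro t ⟨ht, h0⟩
    refine ⟨ht, ?_⟩
    rw [hderiv t ht] at h0
    have hg : 0 < 1 - Real.exp (-2 * t) := by
      have : Real.exp (-2 * t) < 1 := Real.exp_lt_one_iff.mpr (by nlinarith [ht.1])
      linarith
    have := hKpos t ht
    have h2 : (1 - Real.exp (-2 * t)) ^ 2 ≠ 0 := by positivity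
    rcases div_eq_zero_iff.mp h0 with h | h
    · rcases mul_eq_zero.mp h with h | h
      · exact absurd h (ne_of_gt this)
      · exact h
    · exact absurd h h2
  have hinj : Set.InjOn (fun t : ℝ => Real.exp (-t))
      {t ∈ Set.Ioo (0:ℝ) 1 | P.eval (Real.exp (-t)) = 0} := by
    intro a _ b _ hab
    have := Real.exp_injective hab
    linarith [neg_injective this]
  have himg : (fun t : ℝ => Real.exp (-t)) ''
      {t ∈ Set.Ioo (0:ℝ) 1 | P.eval (Real.exp (-t)) = 0} ⊆ ↑P.roots.toFinset := by
    rintro r ⟨t, ⟨_, hroot⟩, rfl⟩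
    simp [Multiset.mem_toFinset, Polynomial.mem_roots, hPne, Polynomial.IsRoot, hroot]
  have hfin2 : {t ∈ Set.Ioo (0:ℝ) 1 | P.eval (Real.exp (-t)) = 0}.Finite := by
    refine Set.Finite.of_finite_image ?_ hinj
    exact (P.roots.toFinset.finite_toSet).subset himg
  have hfin : {t ∈ Set.Ioo (0:ℝ) 1 | deriv (fun s => mehlerK s x u) t = 0}.Finite :=
    hfin2.subset hzero
  refine ⟨hfin, ?_⟩
  have hcard2 : {t ∈ Set.Ioo (0:ℝ) 1 | P.eval (Real.exp (-t)) = 0}.ncard ≤ 4 := by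
    have h1 := Set.ncard_image_of_injOn hinj
    have h2 : ((fun t : ℝ => Real.exp (-t)) ''
        {t ∈ Set.Ioo (0:ℝ) 1 | P.eval (Real.exp (-t)) = 0}).ncard ≤
        (↑P.roots.toFinset : Set ℝ).ncard :=
      Set.ncard_le_ncard himg (P.roots.toFinset.finite_toSet)
    rw [Set.ncard_coe_finset] at h2
    have h3 : P.roots.toFinset.card ≤ P.roots.card := Multiset.toFinset_card_le _
    have h4 : P.roots.card ≤ P.natDegree := P.card_roots'
    rw [← h1]; omega
  calc {t ∈ Set.Ioo (0:ℝ) 1 | deriv (fun s => mehlerK s x u) t = 0}.ncard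
      ≤ {t ∈ Set.Ioo (0:ℝ) 1 | P.eval (Real.exp (-t)) = 0}.ncard :=
        Set.ncard_le_ncard hzero hfin2
    _ ≤ 4 := hcard2
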